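/- Let p ∈ S³, let ζ ∈ ℍ with |ζ| = 1, let α, β ∈ ℍ be tangent to S³ at p, and let w₁, w₂ ∈ ℍ be arbitrary. Then ⟨ᾱ·ζ − p̄·w₁, β̄·ζ − p̄·w₂⟩ = ⟨α, β⟩ + ⟨w₁, w₂⟩ + ⟨α·p̄·ζ, w₂⟩ + ⟨β·p̄·ζ, w₁⟩. -/

import Mathlib

open Quaternion

private lemma re_cyc (a b : Quaternion ℝ) : (a * b).re = (b * a).re := by
  simp [Quaternion.re_mul]; ring

/-- For `p ∈ S³ ⊂ ℍ`, a unit quaternion `ζ`, quaternions `α, β` tangent to `S³`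
at `p`, and arbitrary `w₁, w₂ ∈ ℍ`, one has
`⟨ᾱ·ζ − p̄·w₁, β̄·ζ − p̄·w₂⟩ = ⟨α, β⟩ + ⟨w₁, w₂⟩ + ⟨α·p̄·ζ, w₂⟩ + ⟨β·p̄·ζ, w₁⟩`,
where `⟨x, y⟩ = Re(x·ȳ)`. -/
theorem pullback_metric_identity
    (p ζ α β w₁ w₂ : Quaternion ℝ)
    (hp : ‖p‖ = 1) (hζ : ‖ζ‖ = 1)
    (hα : (α * star p).re = 0) (hβ : (β * star p).re = 0) :
    ((star α * ζ - star p * w₁) * star (star β * ζ - star p * w₂)).re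
      = (α * star β).re + (w₁ * star w₂).re
        + ((α * star p * ζ) * star w₂).re + ((β * star p * ζ) * star w₁).re := by
  have hpp : p * star p = 1 := by
    rw [Quaternion.self_mul_star, Quaternion.normSq_eq_norm_mul_self, hp]; norm_num
  have hzz : ζ * star ζ = 1 := by
    rw [Quaternion.self_mul_star, Quaternion.normSq_eq_norm_mul_self, hζ]; norm_num
  have hαp : p * star α = -(α * star p) := by
    have := Quaternion.star_eq_neg.mpr hα; rwa [star_mul, star_star] at this
  have hβp : p * star β = -(β * star p) := by
    have := Quaternion.star_eq_neg.mpr hβ; rwa [star_mul, star_star] at this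
  have expand : (star α * ζ - star p * w₁) * star (star β * ζ - star p * w₂)
      = star α * ζ * (star ζ * β) - star α * ζ * (star w₂ * p)
        - star p * w₁ * (star ζ * β) + star p * w₁ * (star w₂ * p) := by
    simp only [star_sub, star_mul, star_star]; noncomm_ring
  rw [expand]
  have t1 : (star α * ζ * (star ζ * β)).re = (α * star β).re := by
    have : star α * ζ * (star ζ * β) = star α * (ζ * star ζ) * β := by noncomm_ring
    rw [this, hzz, mul_one]
    simp [Quaternion.re_mul]
  have t4 : (star p * w₁ * (star w₂ * p)).re = (w₁ * star w₂).re := by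
    rw [re_cyc]
    have : star w₂ * p * (star p * w₁) = star w₂ * (p * star p) * w₁ := by noncomm_ring
    rw [this, hpp, mul_one, re_cyc]
  have t2 : (star α * ζ * (star w₂ * p)).re = -((α * star p * ζ) * star w₂).re := by
    rw [re_cyc]
    have : star w₂ * p * (star α * ζ) = star w₂ * (p * star α) * ζ := by noncomm_ring
    rw [this, hαp]
    have : star w₂ * -(α * star p) * ζ = -(star w₂ * (α * star p * ζ)) := by noncomm_ring
    rw [this, Quaternion.re_neg, re_cyc]
  have t3 : (star p * w₁ * (star ζ * β)).re = -((β * star p * ζ) * star w₁).re := by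
    rw [← Quaternion.re_star]
    simp only [star_mul, star_star]
    rw [re_cyc]
    have : star w₁ * p * (star β * ζ) = star w₁ * (p * star β) * ζ := by noncomm_ring
    rw [this, hβp]
    have : star w₁ * -(β * star p) * ζ = -(star w₁ * (β * star p * ζ)) := by noncomm_ring
    rw [this, Quaternion.re_neg, re_cyc]
  simp only [Quaternion.re_add, Quaternion.re_sub, t1, t2, t3, t4]
  ring
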